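/- If a superoperator Φ on operators of a finite-dimensional Hilbert space is Hermitian-preserving (Φ(A†) = Φ(A)† for all A), then with Φ̃ constructed as the controlled dilation above, Tr_anc[(X ⊗ 1) · Φ̃(|+⟩⟨+| ⊗ ρ)] = Φ(ρ) for every state ρ. -/

import Mathlib

open Matrix
open scoped Kronecker ComplexOrder

variable {d : ℕ}

/-- The controlled unitary `W = |0⟩⟨0| ⊗ U + |1⟩⟨1| ⊗ V`. -/
def ctrlW (U V : Matrix (Fin d) (Fin d) ℂ) : Matrix (Fin 2 × Fin d) (Fin 2 × Fin d) ℂ :=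
  fun p q => if p.1 = q.1 then (if p.1 = 0 then U p.2 q.2 else V p.2 q.2) else 0

def pauliX : Matrix (Fin 2) (Fin 2) ℂ := !![0, 1; 1, 0]

noncomputable def plusState : Matrix (Fin 2) (Fin 2) ℂ := (1/2 : ℂ) • !![1, 1; 1, 1]

/-- Partial trace over the ancilla qubit. -/
noncomputable def ptraceAnc (C : Matrix (Fin 2 × Fin d) (Fin 2 × Fin d) ℂ) :
    Matrix (Fin d) (Fin d) ℂ :=
  fun a b => ∑ j : Fin 2, C (j, a) (j, b)

lemma ptraceAnc_key (U V ρ : Matrix (Fin d) (Fin d) ℂ) :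
    ptraceAnc ((pauliX ⊗ₖ (1 : Matrix (Fin d) (Fin d) ℂ))
        * (ctrlW U V * (plusState ⊗ₖ ρ) * (ctrlW U V)ᴴ))
      = (1/2 : ℂ) • (U * ρ * Vᴴ + V * ρ * Uᴴ) := by
  ext a b
  simp only [ptraceAnc, mul_apply, Fintype.sum_prod_type, Fin.sum_univ_two,
    conjTranspose_apply, kroneckerMap_apply, ctrlW, pauliX, plusState,
    Matrix.smul_apply, Matrix.add_apply, Matrix.one_apply, smul_eq_mul,
    Matrix.cons_val', Matrix.cons_val_zero, Matrix.cons_val_one, Matrix.head_cons,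
    Matrix.head_fin_const, Matrix.empty_val', Matrix.cons_val_fin_one]
  norm_num
  simp only [Finset.mul_sum, Finset.sum_mul, star_zero, mul_ite, ite_mul,
    zero_mul, mul_zero, Finset.sum_ite_eq, Finset.sum_ite_eq', Finset.mem_univ, if_true]
  ring_nf
  simp only [Finset.sum_mul]
  rw [add_comm]

lemma ptraceAnc_sum {m : ℕ} (f : Fin m → Matrix (Fin 2 × Fin d) (Fin 2 × Fin d) ℂ) :
    ptraceAnc (∑ i, f i) = ∑ i, ptraceAnc (f i) := by
  ext a b
  simp only [ptraceAnc, Matrix.sum_apply]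
  rw [Finset.sum_comm]

lemma ptraceAnc_smul (c : ℂ) (C : Matrix (Fin 2 × Fin d) (Fin 2 × Fin d) ℂ) :
    ptraceAnc (c • C) = c • ptraceAnc C := by
  ext a b
  simp [ptraceAnc, Finset.mul_sum, mul_add]

/-- If `Φ(•) = ∑ᵢ pᵢ Uᵢ • Vᵢ†` is Hermitian-preserving, then measuring only `X` on the ancilla
of the controlled dilation recovers `Φ(ρ)`: `Tr_anc[(X⊗1)·Φ̃(|+⟩⟨+|⊗ρ)] = Φ(ρ)`. -/
theorem hadamard_test_hermitian_preserving {d m : ℕ}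
    (p : Fin m → ℝ) (hp : ∀ i, 0 ≤ p i) (hpsum : ∑ i, p i = 1)
    (U V : Fin m → Matrix (Fin d) (Fin d) ℂ)
    (hU : ∀ i, (U i)ᴴ * U i = 1 ∧ U i * (U i)ᴴ = 1)
    (hV : ∀ i, (V i)ᴴ * V i = 1 ∧ V i * (V i)ᴴ = 1)
    (hHP : ∀ A : Matrix (Fin d) (Fin d) ℂ,
      (∑ i, (p i : ℂ) • (U i * Aᴴ * (V i)ᴴ)) = (∑ i, (p i : ℂ) • (U i * A * (V i)ᴴ))ᴴ)
    (ρ : Matrix (Fin d) (Fin d) ℂ) (hρ : ρ.PosSemidef) (hρtr : ρ.trace = 1) :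
    ptraceAnc ((pauliX ⊗ₖ (1 : Matrix (Fin d) (Fin d) ℂ))
        * (∑ i, (p i : ℂ) •
            (ctrlW (U i) (V i) * (plusState ⊗ₖ ρ) * (ctrlW (U i) (V i))ᴴ)))
      = ∑ i, (p i : ℂ) • (U i * ρ * (V i)ᴴ) := by
  have hρh : ρᴴ = ρ := hρ.1
  -- symmetry from Hermitian preservation
  have hsymm : ∑ i, (p i : ℂ) • (V i * ρ * (U i)ᴴ) = ∑ i, (p i : ℂ) • (U i * ρ * (V i)ᴴ) := by
    have h := hHP ρ
    rw [hρh] at h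
    rw [h]
    rw [conjTranspose_sum]
    refine Finset.sum_congr rfl fun i _ => ?_
    rw [conjTranspose_smul]
    simp [Matrix.conjTranspose_mul, hρh, mul_assoc, Complex.star_def, Complex.conj_ofReal]
  calc ptraceAnc ((pauliX ⊗ₖ (1 : Matrix (Fin d) (Fin d) ℂ))
        * (∑ i, (p i : ℂ) •
            (ctrlW (U i) (V i) * (plusState ⊗ₖ ρ) * (ctrlW (U i) (V i))ᴴ)))
      = ∑ i, (p i : ℂ) • ptraceAnc ((pauliX ⊗ₖ (1 : Matrix (Fin d) (Fin d) ℂ))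
          * (ctrlW (U i) (V i) * (plusState ⊗ₖ ρ) * (ctrlW (U i) (V i))ᴴ)) := by
        rw [Finset.mul_sum, ptraceAnc_sum]
        refine Finset.sum_congr rfl fun i _ => ?_
        rw [mul_smul_comm, ptraceAnc_smul]
    _ = ∑ i, (p i : ℂ) • ((1/2 : ℂ) • (U i * ρ * (V i)ᴴ + V i * ρ * (U i)ᴴ)) := by
        refine Finset.sum_congr rfl fun i _ => ?_
        rw [ptraceAnc_key]
    _ = (1/2 : ℂ) • (∑ i, (p i : ℂ) • (U i * ρ * (V i)ᴴ)
          + ∑ i, (p i : ℂ) • (V i * ρ * (U i)ᴴ)) := by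
        rw [← Finset.sum_add_distrib, Finset.smul_sum]
        refine Finset.sum_congr rfl fun i _ => ?_
        module
    _ = ∑ i, (p i : ℂ) • (U i * ρ * (V i)ᴴ) := by
        rw [hsymm]
        rw [← two_smul ℂ, smul_smul]
        norm_num
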